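/- For A ∈ M_{m×n}(ℝ), the dimension-free operator norm ‖A‖_V := sup_{0 ≠ x ∈ V} ‖A ⊙ x‖_V / ‖x‖_V over all nonzero finite-dimensional vectors x equals √(n/m)·√(σ_max(AᵀA)). -/

import Mathlib

open Matrix

/-- `x ⊗ 1_k`: the Kronecker product of `x ∈ ℝ^m` with the all-ones vector `1_k ∈ ℝ^k`,
repeating each entry of `x` exactly `k` times. -/
noncomputable def vkron {m : ℕ} (x : Fin m → ℝ) (k : ℕ) : Fin (m * k) → ℝ :=
  fun j => x ⟨(j : ℕ) / k, Nat.div_lt_of_lt_mul (Nat.mul_comm m k ▸ j.isLt)⟩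

/-- `A ⊗ J_k` where `J_k = (1/k)·(all-ones k×k matrix)`. -/
noncomputable def mkronJ {m n : ℕ} (A : Matrix (Fin m) (Fin n) ℝ) (k : ℕ) :
    Matrix (Fin (m * k)) (Fin (n * k)) ℝ :=
  fun i j => A ⟨(i : ℕ) / k, Nat.div_lt_of_lt_mul (Nat.mul_comm m k ▸ i.isLt)⟩
               ⟨(j : ℕ) / k, Nat.div_lt_of_lt_mul (Nat.mul_comm n k ▸ j.isLt)⟩ / k

/-- `J_k`, the `k×k` matrix with all entries `1/k`. -/
noncomputable def Jmat (k : ℕ) : Matrix (Fin k) (Fin k) ℝ := fun _ _ => 1 / k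

/-- The all-ones column vector `1_k` as a `k×1` matrix. -/
def onesColM (k : ℕ) : Matrix (Fin k) (Fin 1) ℝ := fun _ _ => 1

/-- The transpose `1_kᵀ` of the all-ones vector, a `1×k` matrix. -/
def onesRowM (k : ℕ) : Matrix (Fin 1) (Fin k) ℝ := fun _ _ => 1

/-- Kronecker product realized on `Fin (a*c)` / `Fin (b*d)` indices. -/
noncomputable def kron {a b c d : ℕ} (A : Matrix (Fin a) (Fin b) ℝ)
    (B : Matrix (Fin c) (Fin d) ℝ) : Matrix (Fin (a * c)) (Fin (b * d)) ℝ :=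
  Matrix.reindex finProdFinEquiv finProdFinEquiv (Matrix.kroneckerMap (· * ·) A B)

private theorem lcm_eq_left (n p : ℕ) : n * (Nat.lcm n p / n) = Nat.lcm n p :=
  Nat.mul_div_cancel' (Nat.dvd_lcm_left n p)

private theorem lcm_eq_right (n p : ℕ) : p * (Nat.lcm n p / p) = Nat.lcm n p :=
  Nat.mul_div_cancel' (Nat.dvd_lcm_right n p)

private theorem lcm_mid (n p : ℕ) :
    n * (Nat.lcm n p / n) = p * (Nat.lcm n p / p) := by
  rw [lcm_eq_left, lcm_eq_right]

/-- The second semi-tensor product `A ∘ B := (A ⊗ J_{t/n})(B ⊗ J_{t/p})`, `t = lcm(n,p)`. -/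
noncomputable def smul2 {m n p q : ℕ} (A : Matrix (Fin m) (Fin n) ℝ)
    (B : Matrix (Fin p) (Fin q) ℝ) :
    Matrix (Fin (m * (Nat.lcm n p / n))) (Fin (q * (Nat.lcm n p / p))) ℝ :=
  mkronJ A (Nat.lcm n p / n) *
    (mkronJ B (Nat.lcm n p / p)).submatrix (Fin.cast (lcm_mid n p)) id

/-- The MV-2 product `A ⊙ x := (A ⊗ J_{t/n})(x ⊗ 1_{t/r})`, `t = lcm(n,r)`. -/
noncomputable def mv2 {m n r : ℕ} (A : Matrix (Fin m) (Fin n) ℝ) (x : Fin r → ℝ) :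
    Fin (m * (Nat.lcm n r / n)) → ℝ :=
  (mkronJ A (Nat.lcm n r / n)).mulVec
    (fun j => vkron x (Nat.lcm n r / r) (Fin.cast (lcm_mid n r) j))

/-- V-addition `x ⊞ y := x ⊗ 1_{t/m} + y ⊗ 1_{t/n} ∈ ℝ^t`, `t = lcm(m,n)`. -/
noncomputable def vadd' {m n : ℕ} (x : Fin m → ℝ) (y : Fin n → ℝ) :
    Fin (Nat.lcm m n) → ℝ :=
  fun j => vkron x (Nat.lcm m n / m) (Fin.cast (lcm_eq_left m n).symm j) +
           vkron y (Nat.lcm m n / n) (Fin.cast (lcm_eq_right m n).symm j)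

/-- V-subtraction `x ⊟ y := x ⊗ 1_{t/m} − y ⊗ 1_{t/n} ∈ ℝ^t`, `t = lcm(m,n)`. -/
noncomputable def vsub' {m n : ℕ} (x : Fin m → ℝ) (y : Fin n → ℝ) :
    Fin (Nat.lcm m n) → ℝ :=
  fun j => vkron x (Nat.lcm m n / m) (Fin.cast (lcm_eq_left m n).symm j) -
           vkron y (Nat.lcm m n / n) (Fin.cast (lcm_eq_right m n).symm j)

/-- Dimension-free norm `‖z‖_V = (1/√r)·‖z‖` for `z ∈ ℝ^r`. -/
noncomputable def vnorm {r : ℕ} (z : Fin r → ℝ) : ℝ :=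
  Real.sqrt ((∑ i, z i ^ 2) / r)

/-- Dimension-free inner product `⟨u,v⟩_V = (1/t)·⟨u ⊗ 1_{t/a}, v ⊗ 1_{t/b}⟩`. -/
noncomputable def vinner {a b : ℕ} (u : Fin a → ℝ) (v : Fin b → ℝ) : ℝ :=
  (∑ j : Fin (Nat.lcm a b),
      vkron u (Nat.lcm a b / a) (Fin.cast (lcm_eq_left a b).symm j) *
      vkron v (Nat.lcm a b / b) (Fin.cast (lcm_eq_right a b).symm j)) / (Nat.lcm a b)

private theorem lcm_mid' (m n : ℕ) :
    n * (Nat.lcm m n / n) = m * (Nat.lcm m n / m) := by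
  rw [lcm_eq_right, lcm_eq_left]

/-- `Π^m_n := (1/β)(I_n ⊗ 1_βᵀ)(I_m ⊗ 1_α)`, `t = lcm(m,n)`, `α = t/m`, `β = t/n`. -/
noncomputable def PiMat (m n : ℕ) : Matrix (Fin n) (Fin m) ℝ :=
  ((Nat.lcm m n / n : ℕ) : ℝ)⁻¹ •
    ((kron (1 : Matrix (Fin n) (Fin n) ℝ) (onesRowM (Nat.lcm m n / n))).submatrix
        (Fin.cast (Nat.mul_one n).symm) id *
      (kron (1 : Matrix (Fin m) (Fin m) ℝ) (onesColM (Nat.lcm m n / m))).submatrix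
        (Fin.cast (lcm_mid' m n)) (Fin.cast (Nat.mul_one m).symm))

/-- Spectral (operator) norm of a matrix w.r.t. Euclidean norms. -/
noncomputable def specNorm {m n : ℕ} (A : Matrix (Fin m) (Fin n) ℝ) : ℝ :=
  ‖LinearMap.toContinuousLinearMap (Matrix.toEuclideanLin A)‖

section Aux
open Finset

private lemma euclid_norm_sq {k : ℕ} (w : EuclideanSpace ℝ (Fin k)) :
    ‖w‖ ^ 2 = ∑ i, w i ^ 2 := by
  rw [EuclideanSpace.norm_eq, Real.sq_sqrt (by positivity)]
  simp [sq_abs]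

private lemma sum_block {a c : ℕ} (g : Fin a → ℝ) :
    ∑ i : Fin (a * c), g ⟨(i : ℕ) / c, Nat.div_lt_of_lt_mul (Nat.mul_comm a c ▸ i.isLt)⟩
      = c * ∑ i, g i := by
  rw [← Equiv.sum_comp (finProdFinEquiv (m := a) (n := c))
      (fun i : Fin (a * c) =>
        g ⟨(i : ℕ) / c, Nat.div_lt_of_lt_mul (Nat.mul_comm a c ▸ i.isLt)⟩),
    Fintype.sum_prod_type]
  have key : ∀ (x : Fin a) (y : Fin c),
      (((finProdFinEquiv (x, y) : Fin (a * c)) : ℕ) / c) = (x : ℕ) := by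
    intro x y
    simp only [finProdFinEquiv_apply_val]
    rw [Nat.add_mul_div_left _ _ y.pos, Nat.div_eq_of_lt y.isLt, Nat.zero_add]
  calc ∑ x : Fin a, ∑ y : Fin c,
        g ⟨((finProdFinEquiv (x, y) : Fin (a * c)) : ℕ) / c,
          Nat.div_lt_of_lt_mul (Nat.mul_comm a c ▸ (finProdFinEquiv (x, y)).isLt)⟩
      = ∑ x : Fin a, ∑ _y : Fin c, g x := by
        refine Finset.sum_congr rfl fun x _ => Finset.sum_congr rfl fun y _ => ?_
        congr 1
        exact Fin.ext (key x y)
    _ = c * ∑ i, g i := by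
        simp [Finset.sum_const, mul_comm, Finset.mul_sum, Finset.sum_mul]

end Aux
private lemma mkronJ_mulVec {m n s : ℕ} (A : Matrix (Fin m) (Fin n) ℝ)
    (y : Fin (n * s) → ℝ) (i : Fin (m * s)) :
    (mkronJ A s).mulVec y i
      = A.mulVec (fun jj => (∑ b : Fin s, y (finProdFinEquiv (jj, b))) / s)
          ⟨(i : ℕ) / s, Nat.div_lt_of_lt_mul (Nat.mul_comm m s ▸ i.isLt)⟩ := by
  simp only [Matrix.mulVec, dotProduct, mkronJ]
  rw [← Equiv.sum_comp (finProdFinEquiv (m := n) (n := s))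
      (fun j : Fin (n * s) =>
        A ⟨(i : ℕ) / s, Nat.div_lt_of_lt_mul (Nat.mul_comm m s ▸ i.isLt)⟩
          ⟨(j : ℕ) / s, Nat.div_lt_of_lt_mul (Nat.mul_comm n s ▸ j.isLt)⟩ / s * y j),
    Fintype.sum_prod_type]
  refine Finset.sum_congr rfl fun jj _ => ?_
  have key : ∀ b : Fin s,
      (⟨((finProdFinEquiv (jj, b) : Fin (n * s)) : ℕ) / s,
        Nat.div_lt_of_lt_mul (Nat.mul_comm n s ▸ (finProdFinEquiv (jj, b)).isLt)⟩ : Fin n)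
        = jj := by
    intro b
    apply Fin.ext
    simp only [finProdFinEquiv_apply_val]
    rw [Nat.add_mul_div_left _ _ b.pos, Nat.div_eq_of_lt b.isLt, Nat.zero_add]
  calc ∑ b : Fin s,
        A ⟨(i : ℕ) / s, Nat.div_lt_of_lt_mul (Nat.mul_comm m s ▸ i.isLt)⟩
          ⟨((finProdFinEquiv (jj, b) : Fin (n * s)) : ℕ) / s,
            Nat.div_lt_of_lt_mul (Nat.mul_comm n s ▸ (finProdFinEquiv (jj, b)).isLt)⟩ / s *
          y (finProdFinEquiv (jj, b))
      = ∑ b : Fin s,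
          A ⟨(i : ℕ) / s, Nat.div_lt_of_lt_mul (Nat.mul_comm m s ▸ i.isLt)⟩ jj / s *
            y (finProdFinEquiv (jj, b)) := by
        refine Finset.sum_congr rfl fun b _ => ?_
        rw [key b]
    _ = _ := by
        rw [← Finset.mul_sum]
        ring

private lemma sq_avg_le {n s : ℕ} (hs : 0 < s) (y : Fin (n * s) → ℝ) :
    ∑ jj : Fin n, ((∑ b : Fin s, y (finProdFinEquiv (jj, b))) / s) ^ 2
      ≤ (∑ l, y l ^ 2) / s := by
  have h1 : ∑ jj : Fin n, ∑ b : Fin s, y (finProdFinEquiv (jj, b)) ^ 2 = ∑ l, y l ^ 2 := by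
    rw [← Equiv.sum_comp (finProdFinEquiv (m := n) (n := s)) (fun l : Fin (n * s) => y l ^ 2),
      Fintype.sum_prod_type]
  rw [← h1, Finset.sum_div]
  refine Finset.sum_le_sum fun jj _ => ?_
  have h2 := sq_sum_le_card_mul_sum_sq
      (s := (Finset.univ : Finset (Fin s))) (f := fun b => y (finProdFinEquiv (jj, b)))
  simp only [Finset.card_univ, Fintype.card_fin] at h2
  rw [div_pow]
  rw [div_le_div_iff₀ (by positivity) (by positivity)]
  have hs' : (0:ℝ) < s := by exact_mod_cast hs
  nlinarith [h2]

private lemma mulVec_sq_le {m n : ℕ} (A : Matrix (Fin m) (Fin n) ℝ) (z : Fin n → ℝ) :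
    ∑ i, (A.mulVec z i) ^ 2 ≤ specNorm A ^ 2 * ∑ j, z j ^ 2 := by
  set T := LinearMap.toContinuousLinearMap (Matrix.toEuclideanLin A) with hT
  set v : EuclideanSpace ℝ (Fin n) := (WithLp.equiv 2 (Fin n → ℝ)).symm z with hv
  have h1 : ‖T v‖ ≤ ‖T‖ * ‖v‖ := T.le_opNorm v
  have h2 : ‖T v‖ ^ 2 ≤ (‖T‖ * ‖v‖) ^ 2 :=
    pow_le_pow_left₀ (norm_nonneg _) h1 2
  have h3 : ∀ i, T v i = A.mulVec z i := fun i => rfl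
  have h4 : ‖T v‖ ^ 2 = ∑ i, (A.mulVec z i) ^ 2 := by
    rw [euclid_norm_sq]
    exact Finset.sum_congr rfl fun i _ => by rw [h3]
  have h5 : ‖v‖ ^ 2 = ∑ j, z j ^ 2 := by
    rw [euclid_norm_sq]
    rfl
  calc ∑ i, (A.mulVec z i) ^ 2 = ‖T v‖ ^ 2 := h4.symm
    _ ≤ (‖T‖ * ‖v‖) ^ 2 := h2
    _ = ‖T‖ ^ 2 * ‖v‖ ^ 2 := by ring
    _ = specNorm A ^ 2 * ∑ j, z j ^ 2 := by rw [h5]; rfl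
private lemma specNorm_le_bound {m n : ℕ} (A : Matrix (Fin m) (Fin n) ℝ) {b : ℝ}
    (hb : 0 ≤ b)
    (h : ∀ z : Fin n → ℝ, ∑ i, (A.mulVec z i) ^ 2 ≤ b ^ 2 * ∑ j, z j ^ 2) :
    specNorm A ≤ b := by
  refine ContinuousLinearMap.opNorm_le_bound _ hb fun v => ?_
  have h3 : ∀ i, LinearMap.toContinuousLinearMap (Matrix.toEuclideanLin A) v i
      = A.mulVec (fun j => v j) i := fun i => rfl
  have h4 : ‖LinearMap.toContinuousLinearMap (Matrix.toEuclideanLin A) v‖ ^ 2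
      = ∑ i, (A.mulVec (fun j => v j) i) ^ 2 := by
    rw [euclid_norm_sq]
    exact Finset.sum_congr rfl fun i _ => by rw [h3]
  have h5 : ‖v‖ ^ 2 = ∑ j, v j ^ 2 := by rw [euclid_norm_sq]
  refine le_of_pow_le_pow_left₀ two_ne_zero (by positivity) ?_
  calc ‖LinearMap.toContinuousLinearMap (Matrix.toEuclideanLin A) v‖ ^ 2
      = ∑ i, (A.mulVec (fun j => v j) i) ^ 2 := h4
    _ ≤ b ^ 2 * ∑ j, v j ^ 2 := h (fun j => v j)
    _ = b ^ 2 * ‖v‖ ^ 2 := by rw [h5]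
    _ = (b * ‖v‖) ^ 2 := by ring

private lemma vnorm_sq {r : ℕ} (z : Fin r → ℝ) :
    vnorm z ^ 2 = (∑ i, z i ^ 2) / r := by
  rw [vnorm, Real.sq_sqrt (by positivity)]

private lemma vnorm_nonneg {r : ℕ} (z : Fin r → ℝ) : 0 ≤ vnorm z := Real.sqrt_nonneg _

private lemma vnorm_pos {r : ℕ} (hr : 0 < r) {z : Fin r → ℝ} (hz : z ≠ 0) :
    0 < vnorm z := by
  obtain ⟨i, hi⟩ := Function.ne_iff.mp hz
  have hpos : 0 < ∑ i, z i ^ 2 :=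
    Finset.sum_pos' (fun j _ => sq_nonneg _)
      ⟨i, Finset.mem_univ i, by rw [← sq_abs]; exact pow_pos (abs_pos.mpr hi) 2⟩
  have hr' : (0:ℝ) < r := by exact_mod_cast hr
  exact Real.sqrt_pos.mpr (by positivity)

private lemma lcm_div_pos {n r : ℕ} (hn : 0 < n) (hr : 0 < r) :
    0 < Nat.lcm n r / n :=
  Nat.div_pos (Nat.le_of_dvd (Nat.lcm_pos hn hr) (Nat.dvd_lcm_left n r)) hn

private lemma mv2_sum_sq_le {m n r : ℕ} (hn : 0 < n) (hr : 0 < r)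
    (A : Matrix (Fin m) (Fin n) ℝ) (x : Fin r → ℝ) :
    ∑ i, mv2 A x i ^ 2
      ≤ specNorm A ^ 2 * (((Nat.lcm n r / r : ℕ) : ℝ) * ∑ j, x j ^ 2) := by
  set s := Nat.lcm n r / n with hsdef
  set k := Nat.lcm n r / r with hkdef
  have hs : 0 < s := lcm_div_pos hn hr
  set y : Fin (n * s) → ℝ := fun j => vkron x k (Fin.cast (lcm_mid n r) j) with hy
  set z : Fin n → ℝ := fun jj => (∑ b : Fin s, y (finProdFinEquiv (jj, b))) / s with hz
  have h1 : ∀ i : Fin (m * s), mv2 A x i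
      = A.mulVec z ⟨(i : ℕ) / s, Nat.div_lt_of_lt_mul (Nat.mul_comm m s ▸ i.isLt)⟩ :=
    fun i => mkronJ_mulVec A y i
  have h2 : ∑ i, mv2 A x i ^ 2 = (s : ℝ) * ∑ i, (A.mulVec z i) ^ 2 := by
    rw [show (∑ i, mv2 A x i ^ 2)
        = ∑ i : Fin (m * s), (A.mulVec z
            ⟨(i : ℕ) / s, Nat.div_lt_of_lt_mul (Nat.mul_comm m s ▸ i.isLt)⟩) ^ 2 from
      Finset.sum_congr rfl fun i _ => by rw [h1 i]]
    exact sum_block (fun i => (A.mulVec z i) ^ 2)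
  have h3 : ∑ jj, z jj ^ 2 ≤ (∑ l, y l ^ 2) / s := sq_avg_le hs y
  have h4 : ∑ l, y l ^ 2 = (k : ℝ) * ∑ j, x j ^ 2 := by
    calc ∑ l : Fin (n * s), y l ^ 2
        = ∑ l : Fin (n * s), vkron x k (finCongr (lcm_mid n r) l) ^ 2 := by
          refine Finset.sum_congr rfl fun l _ => ?_
          rw [hy, finCongr_apply]
      _ = ∑ l : Fin (r * k), vkron x k l ^ 2 :=
          Equiv.sum_comp (finCongr (lcm_mid n r)) (fun l : Fin (r * k) => vkron x k l ^ 2)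
      _ = (k : ℝ) * ∑ j, x j ^ 2 := sum_block (fun j => x j ^ 2)
  have hs' : (0:ℝ) < s := by exact_mod_cast hs
  calc ∑ i, mv2 A x i ^ 2 = (s : ℝ) * ∑ i, (A.mulVec z i) ^ 2 := h2
    _ ≤ (s : ℝ) * (specNorm A ^ 2 * ∑ jj, z jj ^ 2) :=
        mul_le_mul_of_nonneg_left (mulVec_sq_le A z) hs'.le
    _ ≤ (s : ℝ) * (specNorm A ^ 2 * ((∑ l, y l ^ 2) / s)) :=
        mul_le_mul_of_nonneg_left
          (mul_le_mul_of_nonneg_left h3 (sq_nonneg _)) hs'.le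
    _ = specNorm A ^ 2 * ∑ l, y l ^ 2 := by field_simp
    _ = specNorm A ^ 2 * ((k : ℝ) * ∑ j, x j ^ 2) := by rw [h4]

private lemma mv2_self_sum {m n : ℕ} (hn : 0 < n) (A : Matrix (Fin m) (Fin n) ℝ)
    (z : Fin n → ℝ) :
    ∑ i, mv2 A z i ^ 2 = ((Nat.lcm n n / n : ℕ) : ℝ) * ∑ i, (A.mulVec z i) ^ 2 := by
  set s := Nat.lcm n n / n with hsdef
  have hs : 0 < s := lcm_div_pos hn hn
  set y : Fin (n * s) → ℝ := fun j => vkron z s (Fin.cast (lcm_mid n n) j) with hy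
  have hw : (fun jj : Fin n => (∑ b : Fin s, y (finProdFinEquiv (jj, b))) / s) = z := by
    funext jj
    have key : ∀ b : Fin s, y (finProdFinEquiv (jj, b)) = z jj := by
      intro b
      show z ⟨((Fin.cast (lcm_mid n n) (finProdFinEquiv (jj, b)) : Fin (n * s)) : ℕ) / s, _⟩ = z jj
      congr 1
      apply Fin.ext
      show ((finProdFinEquiv (jj, b) : Fin (n * s)) : ℕ) / s = (jj : ℕ)
      simp only [finProdFinEquiv_apply_val]
      rw [Nat.add_mul_div_left _ _ b.pos, Nat.div_eq_of_lt b.isLt, Nat.zero_add]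
    rw [Finset.sum_congr rfl fun b _ => key b, Finset.sum_const]
    simp only [Finset.card_univ, Fintype.card_fin, nsmul_eq_mul]
    field_simp
  have h1 : ∀ i : Fin (m * s), mv2 A z i
      = A.mulVec z ⟨(i : ℕ) / s, Nat.div_lt_of_lt_mul (Nat.mul_comm m s ▸ i.isLt)⟩ := by
    intro i
    have := mkronJ_mulVec A y i
    rwa [hw] at this
  rw [show (∑ i, mv2 A z i ^ 2)
      = ∑ i : Fin (m * s), (A.mulVec z
          ⟨(i : ℕ) / s, Nat.div_lt_of_lt_mul (Nat.mul_comm m s ▸ i.isLt)⟩) ^ 2 from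
    Finset.sum_congr rfl fun i _ => by rw [h1 i]]
  exact sum_block (fun i => (A.mulVec z i) ^ 2)
private lemma lcm_div_pos' {n r : ℕ} (hn : 0 < n) (hr : 0 < r) :
    0 < Nat.lcm n r / r :=
  Nat.div_pos (Nat.le_of_dvd (Nat.lcm_pos hn hr) (Nat.dvd_lcm_right n r)) hr

/-- ‖A‖_V = √(n/m)·‖A‖ (spectral norm, i.e. √σ_max(AᵀA)). -/
theorem stmt_17 {m n : ℕ} (hm : 0 < m) (hn : 0 < n) (A : Matrix (Fin m) (Fin n) ℝ) :
    sSup {c : ℝ | ∃ (r : ℕ) (_ : 0 < r) (x : Fin r → ℝ),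
        x ≠ 0 ∧ c = vnorm (mv2 A x) / vnorm x} =
      Real.sqrt ((n : ℝ) / (m : ℝ)) * specNorm A := by
  set S := {c : ℝ | ∃ (r : ℕ) (_ : 0 < r) (x : Fin r → ℝ),
      x ≠ 0 ∧ c = vnorm (mv2 A x) / vnorm x} with hS
  have hm' : (0:ℝ) < m := by exact_mod_cast hm
  have hn' : (0:ℝ) < n := by exact_mod_cast hn
  have hsA : 0 ≤ specNorm A := norm_nonneg _
  have hub : ∀ c ∈ S, c ≤ Real.sqrt ((n:ℝ)/m) * specNorm A := by
    rintro c ⟨r, hr, x, hx, rfl⟩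
    have hr' : (0:ℝ) < r := by exact_mod_cast hr
    have hvx := vnorm_pos hr hx
    rw [div_le_iff₀ hvx]
    refine le_of_pow_le_pow_left₀ two_ne_zero (by positivity) ?_
    have hs : 0 < Nat.lcm n r / n := lcm_div_pos hn hr
    have hk : 0 < Nat.lcm n r / r := lcm_div_pos' hn hr
    have hs' : (0:ℝ) < (Nat.lcm n r / n : ℕ) := by exact_mod_cast hs
    have hk' : (0:ℝ) < (Nat.lcm n r / r : ℕ) := by exact_mod_cast hk
    have hsum := mv2_sum_sq_le hn hr A x
    have hkr : ((Nat.lcm n r / r : ℕ) : ℝ) * (r:ℝ)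
        = (n:ℝ) * ((Nat.lcm n r / n : ℕ) : ℝ) := by
      have : (Nat.lcm n r / r) * r = n * (Nat.lcm n r / n) := by
        rw [Nat.mul_comm, lcm_eq_right, lcm_eq_left]
      exact_mod_cast this
    have e2 : (Real.sqrt ((n:ℝ)/m) * specNorm A * vnorm x) ^ 2
        = (n:ℝ)/m * specNorm A ^ 2 * ((∑ j, x j ^ 2)/r) := by
      rw [mul_pow, mul_pow, Real.sq_sqrt (by positivity), vnorm_sq]
    rw [e2, vnorm_sq, Nat.cast_mul, div_le_iff₀ (by positivity)]
    have hSx : (0:ℝ) ≤ ∑ j, x j ^ 2 := by positivity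
    calc ∑ i, mv2 A x i ^ 2
        ≤ specNorm A ^ 2 * (((Nat.lcm n r / r : ℕ) : ℝ) * ∑ j, x j ^ 2) := hsum
      _ = (n:ℝ)/m * specNorm A ^ 2 * ((∑ j, x j ^ 2)/r)
            * ((m:ℝ) * ((Nat.lcm n r / n : ℕ) : ℝ)) := by
          field_simp
          linear_combination (specNorm A ^ 2 * (∑ j, x j ^ 2)) * hkr
  have hBnn : 0 ≤ Real.sqrt ((n:ℝ)/m) * specNorm A := by positivity
  have hone : (fun _ : Fin n => (1:ℝ)) ≠ 0 := by
    intro h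
    have := congrFun h ⟨0, hn⟩
    norm_num at this
  have hne : S.Nonempty :=
    ⟨_, ⟨n, hn, fun _ => (1:ℝ), hone, rfl⟩⟩
  have hbdd : BddAbove S := ⟨_, hub⟩
  refine le_antisymm (csSup_le hne hub) ?_
  have hSnonneg : 0 ≤ sSup S := by
    refine le_trans ?_ (le_csSup hbdd (⟨n, hn, fun _ => (1:ℝ), hone, rfl⟩ : _ ∈ S))
    exact div_nonneg (vnorm_nonneg _) (vnorm_nonneg _)
  have key : specNorm A ≤ Real.sqrt ((m:ℝ)/n) * sSup S := by
    refine ContinuousLinearMap.opNorm_le_bound _ (by positivity) fun v => ?_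
    by_cases hv : v = 0
    · simp [hv]
    set x : Fin n → ℝ := fun j => v j with hxdef
    have hx : x ≠ 0 := by
      intro h
      apply hv
      ext j
      have := congrFun h j; simpa [hxdef] using this
    have hvx := vnorm_pos hn hx
    have hmem : vnorm (mv2 A x) / vnorm x ∈ S := ⟨n, hn, x, hx, rfl⟩
    have hc_le := le_csSup hbdd hmem
    have hc0 : 0 ≤ vnorm (mv2 A x) / vnorm x :=
      div_nonneg (vnorm_nonneg _) (vnorm_nonneg _)
    have hTv : ‖LinearMap.toContinuousLinearMap (Matrix.toEuclideanLin A) v‖ ^ 2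
        = ∑ i, (A.mulVec x i) ^ 2 := by
      rw [euclid_norm_sq]
      exact Finset.sum_congr rfl fun i _ => rfl
    have hv2 : ‖v‖ ^ 2 = ∑ j, x j ^ 2 := by rw [euclid_norm_sq]
    have hs : 0 < Nat.lcm n n / n := lcm_div_pos hn hn
    have hs' : (0:ℝ) < (Nat.lcm n n / n : ℕ) := by exact_mod_cast hs
    have hmv : vnorm (mv2 A x) ^ 2 = (∑ i, (A.mulVec x i) ^ 2) / m := by
      rw [vnorm_sq, mv2_self_sum hn, Nat.cast_mul]
      field_simp
    have hx2 : vnorm x ^ 2 = (∑ j, x j ^ 2)/n := vnorm_sq x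
    refine le_of_pow_le_pow_left₀ two_ne_zero (by positivity) ?_
    have hrhs : (Real.sqrt ((m:ℝ)/n) * sSup S * ‖v‖) ^ 2
        = (m:ℝ)/n * (sSup S) ^ 2 * ∑ j, x j ^ 2 := by
      rw [mul_pow, mul_pow, Real.sq_sqrt (by positivity), hv2]
    rw [hTv, hrhs]
    have hc2 : (vnorm (mv2 A x)/vnorm x) ^ 2 * ((∑ j, x j ^ 2)/n)
        = (∑ i, (A.mulVec x i) ^ 2)/m := by
      rw [div_pow, ← hx2, div_mul_cancel₀ _ (pow_ne_zero 2 hvx.ne'), hmv]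
    have hcle2 : (vnorm (mv2 A x)/vnorm x) ^ 2 ≤ (sSup S) ^ 2 :=
      pow_le_pow_left₀ hc0 hc_le 2
    have hSx : (0:ℝ) ≤ ∑ j, x j ^ 2 := by positivity
    have hexp : ∑ i, (A.mulVec x i) ^ 2
        = (m:ℝ)/n * (vnorm (mv2 A x)/vnorm x) ^ 2 * ∑ j, x j ^ 2 := by
      field_simp at hc2 ⊢
      linear_combination -hc2
    rw [hexp]
    have h1 : (vnorm (mv2 A x)/vnorm x) ^ 2 * ∑ j, x j ^ 2
        ≤ (sSup S) ^ 2 * ∑ j, x j ^ 2 := mul_le_mul_of_nonneg_right hcle2 hSx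
    calc (m:ℝ)/n * (vnorm (mv2 A x)/vnorm x) ^ 2 * ∑ j, x j ^ 2
        = (m:ℝ)/n * ((vnorm (mv2 A x)/vnorm x) ^ 2 * ∑ j, x j ^ 2) := by ring
      _ ≤ (m:ℝ)/n * ((sSup S) ^ 2 * ∑ j, x j ^ 2) :=
          mul_le_mul_of_nonneg_left h1 (by positivity)
      _ = (m:ℝ)/n * (sSup S) ^ 2 * ∑ j, x j ^ 2 := by ring
  calc Real.sqrt ((n:ℝ)/m) * specNorm A
      ≤ Real.sqrt ((n:ℝ)/m) * (Real.sqrt ((m:ℝ)/n) * sSup S) :=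
        mul_le_mul_of_nonneg_left key (Real.sqrt_nonneg _)
    _ = Real.sqrt ((n:ℝ)/m * ((m:ℝ)/n)) * sSup S := by
        rw [← mul_assoc, ← Real.sqrt_mul (by positivity)]
    _ = sSup S := by
        rw [show (n:ℝ)/m * ((m:ℝ)/n) = 1 by field_simp, Real.sqrt_one, one_mul]
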